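/- Let f be a weakly holomorphic modular form of weight k for the Fricke group Γ₀⁺(3) whose Fourier coefficients are all real. Then for every θ in [π/2, 5π/6], the value e^{ikθ/2} f((1/√3)e^{iθ}) is a real number. -/

import Mathlib

open Complex Real

/-- If `f` is a weakly holomorphic modular form of weight `k` for the Fricke
group `Γ₀⁺(3)` with real Fourier coefficients, then `e^{ikθ/2} f((1/√3)e^{iθ})` is real
for every `θ ∈ [π/2, 5π/6]`. -/
theorem statement0 (k : ℤ) (hk : Even k) (f : ℂ → ℂ)
    (hhol : ∀ z : ℂ, 0 < z.im → DifferentiableAt ℂ f z)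
    (htrans : ∀ z : ℂ, 0 < z.im → ∀ a b c d : ℤ, a * d - b * c = 1 → (3 : ℤ) ∣ c →
      f ((a * z + b) / (c * z + d)) = (c * z + d) ^ k * f z)
    (hfricke : ∀ z : ℂ, 0 < z.im →
      f (-1 / (3 * z)) = ((Real.sqrt 3 : ℂ) * z) ^ k * f z)
    (hcoeff : ∃ (n₀ : ℤ) (a : ℤ → ℝ), ∀ z : ℂ, 0 < z.im →
      f z = ∑' n : ℕ, (a (n₀ + n) : ℂ) *
        Complex.exp (2 * (Real.pi : ℂ) * Complex.I * ((n₀ : ℂ) + (n : ℂ)) * z)) :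
    ∀ θ ∈ Set.Icc (Real.pi / 2) (5 * Real.pi / 6),
      ∃ r : ℝ, Complex.exp (Complex.I * k * θ / 2) *
        f ((1 / (Real.sqrt 3 : ℂ)) * Complex.exp (Complex.I * θ)) = (r : ℂ) := by
  obtain ⟨n₀, a, ha⟩ := hcoeff
  have hconj : ∀ z : ℂ, 0 < z.im →
      f (-(starRingEnd ℂ) z) = (starRingEnd ℂ) (f z) := by
    intro z hz
    have hz' : 0 < (-(starRingEnd ℂ) z).im := by
      simpa using hz
    have step : ∀ n : ℕ, (a (n₀ + n) : ℂ) *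
        Complex.exp (2 * (Real.pi : ℂ) * Complex.I * ((n₀ : ℂ) + (n : ℂ)) * (-(starRingEnd ℂ) z))
        = star ((a (n₀ + n) : ℂ) *
          Complex.exp (2 * (Real.pi : ℂ) * Complex.I * ((n₀ : ℂ) + (n : ℂ)) * z)) := by
      intro n
      symm
      have : star ((a (n₀ + n) : ℂ) *
        Complex.exp (2 * (Real.pi : ℂ) * Complex.I * ((n₀ : ℂ) + (n : ℂ)) * z)) =
        (a (n₀ + n) : ℂ) * Complex.exp
          ((starRingEnd ℂ) (2 * (Real.pi : ℂ) * Complex.I * ((n₀ : ℂ) + (n : ℂ)) * z)) := by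
        simp [star_def, map_mul, ← Complex.exp_conj, Complex.conj_ofReal]
      rw [this]
      congr 2
      simp only [map_mul, map_add, Complex.conj_I, Complex.conj_ofReal, map_ofNat,
        map_intCast, map_natCast]
      ring
    calc f (-(starRingEnd ℂ) z) = _ := ha _ hz'
      _ = ∑' n : ℕ, star ((a (n₀ + n) : ℂ) *
          Complex.exp (2 * (Real.pi : ℂ) * Complex.I * ((n₀ : ℂ) + (n : ℂ)) * z)) :=
        tsum_congr step
      _ = star (∑' n : ℕ, (a (n₀ + n) : ℂ) *
          Complex.exp (2 * (Real.pi : ℂ) * Complex.I * ((n₀ : ℂ) + (n : ℂ)) * z)) :=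
        tsum_star.symm
      _ = (starRingEnd ℂ) (f z) := by rw [ha z hz, starRingEnd_apply]
  intro θ hθ
  set z0 : ℂ := (1 / (Real.sqrt 3 : ℂ)) * Complex.exp (Complex.I * θ) with hz0
  have hs3 : (Real.sqrt 3 : ℝ) ≠ 0 := by positivity
  have hs3' : (Real.sqrt 3 : ℂ) ≠ 0 := by exact_mod_cast hs3
  have hsin : 0 < Real.sin θ := by
    have h1 : 0 < Real.pi := Real.pi_pos
    exact Real.sin_pos_of_pos_of_lt_pi (by linarith [hθ.1]) (by linarith [hθ.2])
  have him : 0 < z0.im := by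
    have : z0.im = (Real.sqrt 3)⁻¹ * Real.sin θ := by
      rw [hz0]
      rw [show Complex.I * (θ : ℂ) = (θ : ℂ) * Complex.I by ring, Complex.exp_mul_I]
      simp [Complex.mul_im, Complex.div_im, Complex.cos_ofReal_im, Complex.sin_ofReal_im,
        Complex.cos_ofReal_re, Complex.sin_ofReal_re]
      field_simp
      exact Or.inl (Real.sq_sqrt (by norm_num))
    rw [this]
    positivity
  have hz0ne : z0 ≠ 0 := by
    rw [hz0]
    exact mul_ne_zero (by simpa using hs3') (Complex.exp_ne_zero _)
  have hmulself : (Real.sqrt 3 : ℂ) * (Real.sqrt 3 : ℂ) = 3 := by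
    rw [← Complex.ofReal_mul, Real.mul_self_sqrt (by norm_num : (0:ℝ) ≤ 3)]
    norm_num
  have hconjz0 : (starRingEnd ℂ) z0 =
      (1 / (Real.sqrt 3 : ℂ)) * Complex.exp (-(Complex.I * θ)) := by
    rw [hz0, map_mul, map_div₀, ← Complex.exp_conj]
    simp [Complex.conj_ofReal]
  have hinv : -1 / (3 * z0) = -(starRingEnd ℂ) z0 := by
    have h1 : (3 : ℂ) * z0 * (starRingEnd ℂ) z0 = 1 := by
      calc (3 : ℂ) * z0 * (starRingEnd ℂ) z0
          = 3 / ((Real.sqrt 3 : ℂ) * (Real.sqrt 3 : ℂ)) *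
            (Complex.exp (Complex.I * θ) * Complex.exp (-(Complex.I * θ))) := by
            rw [hconjz0, hz0]; ring
        _ = 1 := by
            rw [← Complex.exp_add, hmulself]
            simp
    field_simp
    linear_combination h1
  have key : (starRingEnd ℂ) (f z0) = Complex.exp ((k : ℂ) * (Complex.I * θ)) * f z0 := by
    rw [← hconj z0 him, ← hinv, hfricke z0 him]
    congr 1
    have : (Real.sqrt 3 : ℂ) * z0 = Complex.exp (Complex.I * θ) := by
      rw [hz0]; field_simp
    rw [this, ← Complex.exp_int_mul]
  have hw : (starRingEnd ℂ) (Complex.exp (Complex.I * k * θ / 2) * f z0) =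
      Complex.exp (Complex.I * k * θ / 2) * f z0 := by
    rw [map_mul, key, ← Complex.exp_conj]
    have hc : (starRingEnd ℂ) (Complex.I * k * θ / 2) = -(Complex.I * k * θ / 2) := by
      simp only [map_div₀, map_mul, Complex.conj_I, map_intCast, Complex.conj_ofReal,
        map_ofNat]
      ring
    rw [hc, ← mul_assoc, ← Complex.exp_add]
    congr 2
    ring
  exact ⟨(Complex.exp (Complex.I * k * θ / 2) * f z0).re,
    (Complex.conj_eq_iff_re.mp hw).symm⟩
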